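/- Let A be a finite local commutative ring of characteristic a power of 2 whose group of units A* is cyclic. Then |A*| equals 2^λ − 1 for some λ ≥ 1, or 2, or 4. -/

import Mathlib

open IsLocalRing

theorem sqrt_bound {A : Type*} [CommRing A] [Finite A]
    (hcyc : IsCyclic Aˣ) (T : Finset A) (hT : ∀ a ∈ T, a * (2 + a) = 0) :
    T.card ≤ 2 := by
  classical
  cases nonempty_fintype Aˣ
  have key : (Finset.univ.filter fun x : Aˣ => x ^ 2 = 1).card ≤ 2 :=
    IsCyclic.card_pow_eq_one_le (by norm_num)
  refine le_trans (Finset.card_le_card_of_injOn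
    (fun a => if h : a * (2 + a) = 0 then
      (⟨1 + a, 1 + a, by linear_combination h, by linear_combination h⟩ : Aˣ) else 1) ?_ ?_) key
  · intro a ha
    have h := hT a ha
    simp only [dif_pos h, Finset.mem_coe, Finset.mem_filter, Finset.mem_univ, true_and]
    ext
    push_cast
    ring_nf
    linear_combination h
  · intro a ha b hb hab
    have ha' : a ∈ T := by simpa using ha
    have hb' : b ∈ T := by simpa using hb
    simp only [dif_pos (hT a ha'), dif_pos (hT b hb')] at hab
    have := congrArg Units.val hab
    simpa using this




theorem field_case {A : Type*} [CommRing A] [IsLocalRing A] [Finite A]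
    (s : ℕ) (hs : 0 < s) (hchar : CharP A (2 ^ s))
    (hm : IsLocalRing.maximalIdeal A = ⊥) :
    ∃ lam ≥ 1, Nat.card Aˣ = 2 ^ lam - 1 := by
  classical
  have hfield : IsField A := IsLocalRing.isField_iff_maximalIdeal_eq.mpr hm
  letI := hfield.toField
  cases nonempty_fintype A
  letI : Fintype Aˣ := Fintype.ofFinite _
  obtain ⟨n, hn, hcard⟩ := FiniteField.card A (2 ^ s)
  refine ⟨s * n, ?_, ?_⟩
  · have : (0:ℕ) < s * n := Nat.mul_pos hs n.2
    omega
  · rw [Nat.card_units, Nat.card_eq_fintype_card, hcard, ← pow_mul]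

theorem main_case {A : Type*} [CommRing A] [IsLocalRing A] [Finite A]
    (s : ℕ) (hs : 0 < s) (hchar : CharP A (2 ^ s))
    (hcyc : IsCyclic Aˣ) (hm : maximalIdeal A ≠ ⊥) :
    Nat.card Aˣ = 2 ∨ Nat.card Aˣ = 4 := by
  classical
  set m : Ideal A := maximalIdeal A with hmdef
  -- 2 ∈ m
  have h2m : (2 : A) ∈ m := by
    have hz : ((2 : A)) ^ s = 0 := by
      have := hchar.cast_eq_zero
      push_cast at this
      simpa using this
    have hprime : m.IsPrime := (maximalIdeal.isMaximal A).isPrime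
    exact hprime.mem_of_pow_mem s (by rw [hz]; exact m.zero_mem)
  -- nilpotency
  have hnil : IsNilpotent m := by
    rw [hmdef, ← IsLocalRing.jacobson_eq_maximalIdeal (⊥ : Ideal A) bot_ne_top]
    exact IsArtinianRing.isNilpotent_jacobson_bot
  have hex : ∃ k, m ^ (k + 1) = ⊥ := by
    obtain ⟨N, hN⟩ := hnil
    exact ⟨N, by rw [pow_succ, hN]; simp⟩
  set t : ℕ := Nat.find hex with htdef
  have htbot : m ^ (t + 1) = ⊥ := Nat.find_spec hex
  have ht1 : 1 ≤ t := by
    by_contra h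
    have ht0 : t = 0 := by omega
    rw [ht0, pow_one] at htbot
    exact hm htbot
  have htne : m ^ t ≠ ⊥ := by
    have := Nat.find_min hex (m := t - 1) (by omega)
    simpa [Nat.sub_add_cancel ht1] using this
  obtain ⟨z0, hz0m, hz0⟩ := Submodule.exists_mem_ne_zero_of_ne_bot htne
  have hmt_m : m ^ t ≤ m := Ideal.pow_le_self (by omega)
  have hmul0 : ∀ x ∈ m, ∀ y ∈ m ^ t, x * y = 0 := by
    intro x hx y hy
    have hmem : x * y ∈ m ^ (t + 1) := by
      rw [pow_succ, mul_comm x y]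
      exact Ideal.mul_mem_mul hy hx
    rw [htbot] at hmem
    exact hmem
  have hzz : z0 * z0 = 0 := hmul0 z0 (hmt_m hz0m) z0 hz0m
  have h2z : (2 : A) * z0 = 0 := hmul0 2 h2m z0 hz0m
  -- 2 ∈ m ^ t
  have h2t : (2 : A) ∈ m ^ t := by
    by_contra h2t
    have h1 : (2:A) ≠ 0 := fun h => h2t (h ▸ (m ^ t).zero_mem)
    have h2 : (2:A) ≠ -z0 := fun h => h2t (h ▸ (Submodule.neg_mem _ hz0m))
    have h3 : (2:A) ≠ z0 := fun h => h2t (h ▸ hz0m)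
    have hcard : ({0, z0, -2, -2 + z0} : Finset A).card = 4 := by
      rw [Finset.card_insert_of_notMem (by
        simp only [Finset.mem_insert, Finset.mem_singleton]
        push_neg
        refine ⟨hz0.symm, ?_, ?_⟩
        · intro h; exact h1 (by linear_combination h)
        · intro h; exact h3 (by linear_combination h))]
      rw [Finset.card_insert_of_notMem (by
        simp only [Finset.mem_insert, Finset.mem_singleton]
        push_neg
        refine ⟨?_, ?_⟩
        · intro h; exact h2 (by linear_combination h)
        · intro h; exact h1 (by linear_combination h))]
      rw [Finset.card_insert_of_notMem (by
        simp only [Finset.mem_singleton]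
        intro h; exact hz0 (by linear_combination -h))]
      rfl
    have hle := sqrt_bound hcyc {0, z0, -2, -2 + z0} (by
      intro a ha
      simp only [Finset.mem_insert, Finset.mem_singleton] at ha
      rcases ha with rfl | rfl | rfl | rfl
      · ring
      · linear_combination h2z + hzz
      · ring
      · linear_combination hzz - h2z)
    rw [hcard] at hle
    omega
  have hmul0' : ∀ a ∈ m, 2 * a = 0 := by
    intro a ha
    rw [mul_comm]
    exact hmul0 a ha 2 h2t
  -- cardinality bound for square-zero ideals
  have hsq : ∀ I : Ideal A, I ≤ m → (∀ a ∈ I, a * a = 0) →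
      Nat.card ((I : Set A)) ≤ 2 := by
    intro I hIm hIsq
    have hfin : (I : Set A).Finite := Set.toFinite _
    rw [Nat.card_eq_card_finite_toFinset hfin]
    apply sqrt_bound hcyc
    intro a ha
    have haI : a ∈ I := by simpa using ha
    have h2a : 2 * a = 0 := hmul0' a (hIm haI)
    linear_combination h2a + hIsq a haI
  -- card of m^t is 2
  have hmtsq : ∀ a ∈ m ^ t, a * a = 0 := fun a ha => hmul0 a (hmt_m ha) a ha
  have hnt : Nontrivial ((m ^ t : Ideal A) : Set A) :=
    ⟨⟨0, (m ^ t).zero_mem⟩, ⟨z0, hz0m⟩, fun h => hz0 (congrArg Subtype.val h).symm⟩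
  have hcmt : Nat.card ((m ^ t : Ideal A) : Set A) = 2 := by
    have h1 := hsq (m ^ t) hmt_m hmtsq
    have h2 : 1 < Nat.card ((m ^ t : Ideal A) : Set A) :=
      Finite.one_lt_card_iff_nontrivial.mpr hnt
    omega
  -- t ≤ 2
  have ht2 : t ≤ 2 := by
    by_contra hgt
    push_neg at hgt
    have hsub : m ^ (t - 1) ≤ m := Ideal.pow_le_self (by omega)
    have hsqt : ∀ a ∈ m ^ (t - 1), a * a = 0 := by
      intro a ha
      have hmem : a * a ∈ m ^ ((t - 1) + (t - 1)) := by
        rw [pow_add]; exact Ideal.mul_mem_mul ha ha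
      have hle : m ^ ((t - 1) + (t - 1)) ≤ m ^ (t + 1) :=
        Ideal.pow_le_pow_right (by omega)
      have := hle hmem
      rwa [htbot] at this
    have hc1 := hsq _ hsub hsqt
    have hsubset : ((m ^ t : Ideal A) : Set A) ⊆ ((m ^ (t - 1) : Ideal A) : Set A) :=
      Ideal.pow_le_pow_right (by omega)
    have hEq : ((m ^ t : Ideal A) : Set A) = ((m ^ (t - 1) : Ideal A) : Set A) := by
      apply Set.eq_of_subset_of_ncard_le hsubset ?_ (Set.toFinite _)
      rw [← Nat.card_coe_set_eq, ← Nat.card_coe_set_eq, hcmt]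
      exact hc1
    have Ie : m ^ (t - 1) = m ^ t := SetLike.coe_injective hEq.symm
    have : m ^ t = ⊥ := by
      have e1 : m ^ t = m ^ (t - 1) * m := by
        rw [← pow_succ]; congr 1; omega
      rw [e1, Ie, ← pow_succ, htbot]
    exact htne this
  have hm3 : m ^ 3 = ⊥ := by
    have hle : m ^ 3 ≤ m ^ (t + 1) := Ideal.pow_le_pow_right (by omega)
    rw [htbot] at hle
    exact le_bot_iff.mp hle
  have hcm2 : Nat.card ((m ^ 2 : Ideal A) : Set A) ≤ 2 := by
    apply hsq _ (Ideal.pow_le_self two_ne_zero)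
    intro a ha
    have hmem : a * a ∈ m ^ 4 := by
      rw [show (4:ℕ) = 2 + 2 from rfl, pow_add]
      exact Ideal.mul_mem_mul ha ha
    have hle : m ^ 4 ≤ m ^ 3 := Ideal.pow_le_pow_right (by omega)
    have := hle hmem
    rwa [hm3] at this
  -- squaring additive hom on m
  have hS0 : Nat.card ({a : A | a * (2 + a) = 0} : Set A) ≤ 2 := by
    have hfin : ({a : A | a * (2 + a) = 0} : Set A).Finite := Set.toFinite _
    rw [Nat.card_eq_card_finite_toFinset hfin]
    apply sqrt_bound hcyc
    intro a ha
    simpa using ha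
  set φ : (↥m) →+ A :=
    { toFun := fun a => (a : A) * a
      map_zero' := by simp
      map_add' := by
        intro a b
        have h2ab : 2 * ((a : A) * b) = 0 :=
          hmul0' _ (Ideal.mul_mem_right _ _ a.2)
        push_cast
        ring_nf
        linear_combination h2ab } with hφdef
  have hkerle : Nat.card φ.ker ≤ 2 := by
    refine le_trans (Nat.card_le_card_of_injective
      (fun x => (⟨(x : ↥m), ?_⟩ : {a : A | a * (2 + a) = 0})) ?_) hS0
    · have hx : ((x : ↥m) : A) * (x : ↥m) = 0 := x.2
      have h2x : 2 * ((x : ↥m) : A) = 0 := hmul0' _ (x : ↥m).2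
      show ((x : ↥m) : A) * (2 + ((x : ↥m) : A)) = 0
      linear_combination h2x + hx
    · intro x y h
      simp only [Subtype.mk.injEq] at h
      exact Subtype.ext (Subtype.ext h)

  have hrangele : Nat.card φ.range ≤ Nat.card ((m ^ 2 : Ideal A) : Set A) := by
    refine Nat.card_le_card_of_injective
      (fun x => (⟨(x : A), ?_⟩ : ((m ^ 2 : Ideal A) : Set A))) ?_
    · obtain ⟨a, ha⟩ := x.2
      have : (a : A) * a ∈ m ^ 2 := by
        rw [pow_two]; exact Ideal.mul_mem_mul a.2 a.2
      rw [← ha]; exact this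
    · intro x y h
      simp only [Subtype.mk.injEq] at h
      exact Subtype.ext h
  have hcardm : Nat.card (↥m) ≤ 4 := by
    have e1 : Nat.card (↥m) = Nat.card ((↥m) ⧸ φ.ker) * Nat.card φ.ker :=
      AddSubgroup.card_eq_card_quotient_mul_card_addSubgroup φ.ker
    have e2 : Nat.card ((↥m) ⧸ φ.ker) = Nat.card φ.range :=
      Nat.card_congr (QuotientAddGroup.quotientKerEquivRange φ).toEquiv
    rw [e1, e2]
    calc Nat.card φ.range * Nat.card φ.ker ≤ 2 * 2 :=
          Nat.mul_le_mul (le_trans hrangele hcm2) hkerle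
      _ = 4 := rfl
  -- multiplication by z0
  set ρ : A →+ A := AddMonoidHom.mulRight z0 with hρdef
  have hkerρ : ρ.ker = m.toAddSubgroup := by
    ext x
    simp only [AddMonoidHom.mem_ker, hρdef, AddMonoidHom.mulRight_apply,
      Submodule.mem_toAddSubgroup]
    constructor
    · intro hx
      by_contra hxm
      have hux : IsUnit x := by
        by_contra hnu
        exact hxm ((IsLocalRing.mem_maximalIdeal x).mpr hnu)
      exact hz0 ((hux.mul_right_eq_zero).mp hx)
    · intro hx
      exact hmul0 x hx z0 hz0m
  have hr2 : Nat.card ρ.range = 2 := by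
    have hle : Nat.card ρ.range ≤ 2 := by
      refine le_trans (Nat.card_le_card_of_injective
        (fun x => (⟨(x : A), ?_⟩ : ((m ^ t : Ideal A) : Set A))) ?_) (le_of_eq hcmt)
      · obtain ⟨a, ha⟩ := x.2
        have : a * z0 ∈ m ^ t := Ideal.mul_mem_left _ _ hz0m
        simpa [← ha, hρdef] using this
      · intro x y h
        simp only [Subtype.mk.injEq] at h
        exact Subtype.ext h
    have hlt : 1 < Nat.card ρ.range := by
      refine Finite.one_lt_card_iff_nontrivial.mpr ⟨⟨0, zero_mem _⟩,
        ⟨z0, ⟨1, by simp [hρdef]⟩⟩, fun h => hz0 ?_⟩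
      have := congrArg Subtype.val h
      simpa using this.symm
    omega
  have hcardA : Nat.card A = 2 * Nat.card (↥m) := by
    have e1 : Nat.card A = Nat.card (A ⧸ ρ.ker) * Nat.card ρ.ker :=
      AddSubgroup.card_eq_card_quotient_mul_card_addSubgroup ρ.ker
    have e2 : Nat.card (A ⧸ ρ.ker) = Nat.card ρ.range :=
      Nat.card_congr (QuotientAddGroup.quotientKerEquivRange ρ).toEquiv
    have e3 : Nat.card ρ.ker = Nat.card (↥m) := by rw [hkerρ]; rfl
    rw [e1, e2, e3, hr2]
  -- units are the complement of m
  have hU : Nat.card Aˣ = Nat.card ({x : A | IsUnit x} : Set A) :=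
    Nat.card_congr ⟨fun u => ⟨u, u.isUnit⟩, fun x => x.2.unit,
      fun u => Units.ext rfl, fun x => Subtype.ext x.2.unit_spec⟩
  have hcompl : ({x : A | IsUnit x} : Set A)ᶜ = (m : Set A) := by
    ext x
    simp only [Set.mem_compl_iff, Set.mem_setOf_eq, SetLike.mem_coe]
    rw [hmdef, IsLocalRing.mem_maximalIdeal, mem_nonunits_iff]
  have hsum := Set.ncard_add_ncard_compl ({x : A | IsUnit x} : Set A)
  rw [hcompl] at hsum
  have hmncard : (m : Set A).ncard = Nat.card (↥m) := (Nat.card_coe_set_eq _).symm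
  have hUncard : ({x : A | IsUnit x} : Set A).ncard
      = Nat.card ({x : A | IsUnit x} : Set A) := (Nat.card_coe_set_eq _).symm
  have hUm : Nat.card Aˣ = Nat.card (↥m) := by
    rw [hU, ← hUncard]
    omega
  -- finish
  have hge2 : 2 ≤ Nat.card (↥m) := by
    refine Finite.one_lt_card_iff_nontrivial.mpr
      ⟨⟨0, m.zero_mem⟩, ⟨z0, hmt_m hz0m⟩, fun h => hz0 (congrArg Subtype.val h).symm⟩
  have hdvd : 2 ∣ Nat.card (↥m) := by
    have hle : (m ^ t).toAddSubgroup ≤ m.toAddSubgroup := fun x hx => hmt_m hx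
    have := AddSubgroup.card_dvd_of_le hle
    have he : Nat.card ((m ^ t).toAddSubgroup) = 2 := hcmt
    rwa [he] at this
  rw [hUm]
  omega

/-- A finite local commutative ring of characteristic a power of 2 with
cyclic unit group has `|A*| = 2^λ - 1` for some `λ ≥ 1`, or `|A*| = 2`, or `|A*| = 4`. -/
theorem stmt12 {A : Type*} [CommRing A] [IsLocalRing A] [Finite A]
    (s : ℕ) (hs : 0 < s) (hchar : CharP A (2 ^ s))
    (hcyc : IsCyclic Aˣ) :
    (∃ lam ≥ 1, Nat.card Aˣ = 2 ^ lam - 1) ∨ Nat.card Aˣ = 2 ∨ Nat.card Aˣ = 4 := by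
  by_cases hm : IsLocalRing.maximalIdeal A = ⊥
  · exact Or.inl (field_case s hs hchar hm)
  · exact Or.inr (main_case s hs hchar hcyc hm)
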